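/- Let A be a unital complex Banach algebra with ‖1‖ = 1 and a ∈ A with ‖a‖ ≤ 1. Then a is dissipative if and only if ‖1 + t·a‖ ≤ 1 + t² for all t ≥ 0. -/

import Mathlib

open Complex Set

/-- A state on a unital Banach algebra: a continuous linear functional `ρ`
with `‖ρ‖ = 1` and `ρ 1 = 1`. -/
def IsState {A : Type*} [NormedRing A] [NormedAlgebra ℂ A] (ρ : A →L[ℂ] ℂ) : Prop :=
  ‖ρ‖ = 1 ∧ ρ 1 = 1

/-- An element is dissipative if `Re ρ(a) ≤ 0` for all states `ρ`. -/
def IsDissipative {A : Type*} [NormedRing A] [NormedAlgebra ℂ A] (a : A) : Prop :=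
  ∀ ρ : A →L[ℂ] ℂ, IsState ρ → (ρ a).re ≤ 0

noncomputable section Stmt3Aux

variable {A : Type*} [NormedRing A] [NormedAlgebra ℂ A] [NormOneClass A]

/-- difference quotient -/
def gq (x : A) (t : ℝ) : ℝ := (‖(1 : A) + t • x‖ - 1) / t

/-- sublinear functional -/
def pq (x : A) : ℝ := sInf (gq x '' Set.Ioi 0)

example (t : ℝ) (x : A) : ((t : ℂ)) • x = t • x := Complex.coe_smul t x

example (x : A) (s k : ℝ) : ((k • x) * (s • x) : A) = (k*s) • (x*x) := by
  rw [smul_mul_assoc, mul_smul_comm, smul_smul]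

lemma norm_one_add_smul_le (x : A) {t : ℝ} (ht : 0 ≤ t) : ‖(1:A) + t • x‖ ≤ 1 + t * ‖x‖ := by
  calc ‖(1:A) + t • x‖ ≤ ‖(1:A)‖ + ‖t • x‖ := norm_add_le _ _
    _ = 1 + t * ‖x‖ := by rw [norm_one, norm_smul, Real.norm_eq_abs, _root_.abs_of_nonneg ht]

lemma norm_one_add_smul_ge (x : A) {t : ℝ} (ht : 0 ≤ t) : 1 - t * ‖x‖ ≤ ‖(1:A) + t • x‖ := by
  have := norm_sub_norm_le (1:A) (-(t • x))
  simp only [sub_neg_eq_add, norm_neg, norm_one, norm_smul, Real.norm_eq_abs,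
    _root_.abs_of_nonneg ht] at this
  linarith

lemma gq_le_norm (x : A) {t : ℝ} (ht : 0 < t) : gq x t ≤ ‖x‖ := by
  rw [gq, div_le_iff₀ ht]
  have := norm_one_add_smul_le x ht.le
  nlinarith

lemma neg_norm_le_gq (x : A) {t : ℝ} (ht : 0 < t) : -‖x‖ ≤ gq x t := by
  rw [gq, le_div_iff₀ ht]
  have := norm_one_add_smul_ge x ht.le
  nlinarith

lemma gq_mono (x : A) {s t : ℝ} (hs : 0 < s) (hst : s ≤ t) : gq x s ≤ gq x t := by
  have ht : 0 < t := hs.trans_le hst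
  have hkey : (1:A) + s • x = (1 - s/t) • (1:A) + (s/t) • ((1:A) + t • x) := by
    have h1 : s / t * t = s := div_mul_cancel₀ _ ht.ne'
    rw [smul_add, smul_smul, h1, ← add_assoc, ← add_smul]
    norm_num
  have hnorm : ‖(1:A) + s • x‖ ≤ (1 - s/t) + (s/t) * ‖(1:A) + t • x‖ := by
    calc ‖(1:A) + s • x‖ ≤ ‖(1 - s/t) • (1:A)‖ + ‖(s/t) • ((1:A) + t • x)‖ := by
          rw [hkey]; exact norm_add_le _ _
      _ = (1 - s/t) + (s/t) * ‖(1:A) + t • x‖ := by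
          rw [norm_smul, norm_smul, norm_one, Real.norm_eq_abs, Real.norm_eq_abs,
            _root_.abs_of_nonneg (sub_nonneg.2 ((div_le_one ht).2 hst)), mul_one,
            _root_.abs_of_nonneg (by positivity)]
  rw [gq, gq, div_le_div_iff₀ hs ht]
  have h2 := mul_le_mul_of_nonneg_right hnorm ht.le
  have h3 : (1 - s/t + s/t*‖(1:A)+t•x‖)*t = t - s + s*‖(1:A)+t•x‖ := by field_simp
  linarith

lemma gq_nonempty (x : A) : (gq x '' Set.Ioi 0).Nonempty := ⟨gq x 1, 1, by norm_num⟩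

lemma gq_bddBelow (x : A) : BddBelow (gq x '' Set.Ioi 0) := by
  refine ⟨-‖x‖, ?_⟩
  rintro b ⟨t, ht, rfl⟩
  exact neg_norm_le_gq x ht

lemma pq_le_gq (x : A) {t : ℝ} (ht : 0 < t) : pq x ≤ gq x t :=
  csInf_le (gq_bddBelow x) ⟨t, ht, rfl⟩

lemma neg_norm_le_pq (x : A) : -‖x‖ ≤ pq x :=
  le_csInf (gq_nonempty x) (by rintro b ⟨t, ht, rfl⟩; exact neg_norm_le_gq x ht)

lemma pq_le_norm (x : A) : pq x ≤ ‖x‖ :=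
  (pq_le_gq x one_pos).trans (gq_le_norm x one_pos)

lemma pq_add (x y : A) : pq (x + y) ≤ pq x + pq y := by
  refine le_of_forall_pos_le_add fun ε hε => ?_
  obtain ⟨b₁, ⟨t₁, ht₁, rfl⟩, hb₁⟩ := exists_lt_of_csInf_lt (gq_nonempty x)
    (show pq x < pq x + ε/2 by linarith)
  obtain ⟨b₂, ⟨t₂, ht₂, rfl⟩, hb₂⟩ := exists_lt_of_csInf_lt (gq_nonempty y)
    (show pq y < pq y + ε/2 by linarith)
  rw [mem_Ioi] at ht₁ ht₂
  set s := min t₁ t₂ / 2 with hsdef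
  have hs : 0 < s := by positivity
  have hsub : gq (x + y) s ≤ gq x (2*s) + gq y (2*s) := by
    have hkey : (1:A) + s • (x + y) = (1/2 : ℝ) • ((1:A) + (2*s) • x)
        + (1/2 : ℝ) • ((1:A) + (2*s) • y) := by
      match_scalars <;> ring
    have hnorm : ‖(1:A) + s • (x + y)‖ ≤
        (‖(1:A) + (2*s) • x‖ + ‖(1:A) + (2*s) • y‖) / 2 := by
      calc ‖(1:A) + s • (x + y)‖
          ≤ ‖(1/2 : ℝ) • ((1:A) + (2*s) • x)‖ + ‖(1/2 : ℝ) • ((1:A) + (2*s) • y)‖ := by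
            rw [hkey]; exact norm_add_le _ _
        _ = (‖(1:A) + (2*s) • x‖ + ‖(1:A) + (2*s) • y‖) / 2 := by
            rw [norm_smul, norm_smul, Real.norm_eq_abs,
              _root_.abs_of_nonneg (by norm_num : (0:ℝ) ≤ 1/2)]
            ring
    rw [gq, gq, gq, ← add_div, div_le_div_iff₀ hs (by linarith)]
    nlinarith [hnorm]
  have h2s₁ : 2*s ≤ t₁ := by
    have := min_le_left t₁ t₂; rw [hsdef]; linarith
  have h2s₂ : 2*s ≤ t₂ := by
    have := min_le_right t₁ t₂; rw [hsdef]; linarith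
  calc pq (x+y) ≤ gq (x+y) s := pq_le_gq _ hs
    _ ≤ gq x (2*s) + gq y (2*s) := hsub
    _ ≤ gq x t₁ + gq y t₂ := add_le_add (gq_mono x (by linarith) h2s₁) (gq_mono y (by linarith) h2s₂)
    _ ≤ (pq x + ε/2) + (pq y + ε/2) := add_le_add hb₁.le hb₂.le
    _ = pq x + pq y + ε := by ring

lemma gq_smul (x : A) {c t : ℝ} (hc : 0 < c) (ht : 0 < t) :
    gq (c • x) t = c * gq x (c * t) := by
  rw [gq, gq, smul_smul, mul_comm t c]
  field_simp

lemma pq_smul (x : A) {c : ℝ} (hc : 0 < c) : pq (c • x) = c * pq x := by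
  refine le_antisymm ?_ ?_
  · rw [← div_le_iff₀' hc]
    refine le_csInf (gq_nonempty x) ?_
    rintro b ⟨t, ht, rfl⟩
    rw [mem_Ioi] at ht
    rw [div_le_iff₀' hc,
      show c * gq x t = gq (c • x) (t/c) from by
        rw [gq_smul x hc (by positivity), mul_div_cancel₀ _ hc.ne']]
    exact pq_le_gq _ (by positivity)
  · refine le_csInf (gq_nonempty _) ?_
    rintro b ⟨t, ht, rfl⟩
    rw [mem_Ioi] at ht
    have h1 : gq (c • x) t = c * gq x (c*t) := gq_smul x hc ht
    rw [h1]
    exact mul_le_mul_of_nonneg_left (pq_le_gq x (by positivity)) hc.le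

lemma pq_zero : pq (0 : A) = 0 := by
  have h1 : ∀ t : ℝ, 0 < t → gq (0 : A) t = 0 := by
    intro t ht; rw [gq]; simp
  refine le_antisymm ((pq_le_gq 0 one_pos).trans (by rw [h1 1 one_pos])) ?_
  refine le_csInf (gq_nonempty 0) ?_
  rintro b ⟨t, ht, rfl⟩
  rw [mem_Ioi] at ht
  rw [h1 t ht]

lemma neg_pq_neg_le (x : A) : -pq (-x) ≤ pq x := by
  have := pq_add x (-x)
  rw [add_neg_cancel, pq_zero] at this
  linarith

lemma pq_one : pq (1 : A) = 1 := by
  have h1 : ∀ t : ℝ, 0 < t → gq (1 : A) t = 1 := by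
    intro t ht
    rw [gq, show (1:A) + t • (1:A) = (1+t) • (1:A) from by match_scalars; ring,
      norm_smul, norm_one, Real.norm_eq_abs, _root_.abs_of_nonneg (by linarith)]
    field_simp
    ring
  refine le_antisymm ((pq_le_gq 1 one_pos).trans (by rw [h1 1 one_pos])) ?_
  refine le_csInf (gq_nonempty 1) ?_
  rintro b ⟨t, ht, rfl⟩
  rw [mem_Ioi] at ht
  rw [h1 t ht]

lemma pq_neg_one : pq (-1 : A) = -1 := by
  have h1 : ∀ t : ℝ, 0 < t → gq (-1 : A) t = (|1 - t| - 1)/t := by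
    intro t ht
    rw [gq, show (1:A) + t • (-1:A) = (1-t) • (1:A) from by match_scalars; ring,
      norm_smul, norm_one, Real.norm_eq_abs, mul_one]
  refine le_antisymm ?_ ?_
  · refine (pq_le_gq (-1) one_pos).trans ?_
    rw [h1 1 one_pos]; norm_num
  · refine le_csInf (gq_nonempty (-1)) ?_
    rintro b ⟨t, ht, rfl⟩
    rw [mem_Ioi] at ht
    rw [h1 t ht, le_div_iff₀ ht]
    have := abs_nonneg (1-t)
    have h2 : 1 - t ≤ |1-t| := le_abs_self _
    linarith

lemma pq_smul_I_nonpos :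
    pq ((Complex.I) • (1 : A)) ≤ 0 ∧ pq (-(Complex.I • (1 : A))) ≤ 0 := by
  have key : ∀ (z : ℂ), ‖z‖ = 1 → z.re = 0 → pq (z • (1 : A)) ≤ 0 := by
    intro z hz hre
    have hz2 : z.re^2 + z.im^2 = 1 := by
      have h := Complex.sq_norm z
      rw [hz] at h
      rw [Complex.normSq_apply] at h
      nlinarith [h]
  -- now the ε bound
    refine le_of_forall_pos_le_add fun ε hε => ?_
    have ht : (0:ℝ) < ε := hε
    have hsmul : (1:A) + ε • z • (1:A) = ((1 + ↑ε*z : ℂ)) • (1:A) := by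
      rw [add_smul, one_smul, ← Complex.coe_smul ε, smul_smul]
    have habs : ‖(1 + ↑ε*z : ℂ)‖ = Real.sqrt (1 + ε^2) := by
      rw [Complex.norm_def, Complex.normSq_apply]
      congr 1
      simp only [Complex.add_re, Complex.add_im, Complex.mul_re, Complex.mul_im,
        Complex.one_re, Complex.one_im, Complex.ofReal_re, Complex.ofReal_im, hre]
      have him : z.im^2 = 1 := by rw [hre] at hz2; nlinarith [hz2]
      nlinarith [him]
    have h1 : gq (z • (1:A)) ε ≤ ε/2 := by
      rw [gq, hsmul, norm_smul, norm_one, mul_one, habs, div_le_iff₀ ht]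
      have hsq : Real.sqrt (1 + ε^2) ≤ 1 + ε^2/2 := by
        rw [show (1:ℝ) + ε^2 / 2 = Real.sqrt ((1 + ε^2/2)^2) from
          (Real.sqrt_sq (by positivity)).symm]
        exact Real.sqrt_le_sqrt (by nlinarith)
      nlinarith
    have := (pq_le_gq (z • (1:A)) ht).trans h1
    linarith
  constructor
  · simpa using key Complex.I (by simp) (by simp)
  · have h : -(Complex.I • (1:A)) = (-Complex.I) • (1:A) := by rw [neg_smul]
    rw [h]
    exact key (-Complex.I) (by simp) (by simp)

lemma pq_nonpos_of_dissipative (a : A) (hd : IsDissipative a) : pq a ≤ 0 := by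
  by_cases h0 : a = 0
  · rw [h0, pq_zero]
  -- Hahn-Banach extension of c • a ↦ c * pq a
  have hsub : ∀ x : (LinearPMap.mkSpanSingleton a (pq a) h0 : A →ₗ.[ℝ] ℝ).domain,
      (LinearPMap.mkSpanSingleton a (pq a) h0 : A →ₗ.[ℝ] ℝ) x ≤ pq (x : A) := by
    rintro ⟨x, hx⟩
    obtain ⟨c, rfl⟩ := Submodule.mem_span_singleton.1 hx
    rw [LinearPMap.mkSpanSingleton'_apply, RingHom.id_apply]
    rcases lt_trichotomy c 0 with hc | hc | hc
    · have h1 : pq ((c : ℝ) • a) = (-c) * pq (-a) := by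
        rw [show (c:ℝ) • a = (-c) • (-a) from by rw [neg_smul, smul_neg, neg_neg],
          pq_smul _ (by linarith)]
      rw [h1, smul_eq_mul]
      have h2 := neg_pq_neg_le a
      nlinarith
    · simp [hc, pq_zero]
    · rw [pq_smul _ hc, smul_eq_mul]
  obtain ⟨u, hu_eq, hu_le⟩ := exists_extension_of_le_sublinear
    (LinearPMap.mkSpanSingleton a (pq a) h0) pq
    (fun c hc x => pq_smul x hc) (fun x y => pq_add x y) hsub
  have hua : u a = pq a := by
    have := hu_eq ⟨a, Submodule.mem_span_singleton_self a⟩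
    rwa [LinearPMap.mkSpanSingleton_apply] at this
  -- u is bounded with norm ≤ 1
  have hubound : ∀ x : A, ‖u x‖ ≤ 1 * ‖x‖ := by
    intro x
    rw [one_mul, Real.norm_eq_abs, abs_le]
    constructor
    · have := (hu_le (-x)).trans (pq_le_norm (-x))
      rw [map_neg, norm_neg] at this
      linarith
    · exact (hu_le x).trans (pq_le_norm x)
  set uc : A →L[ℝ] ℝ := LinearMap.mkContinuous u 1 hubound with huc
  have hucapp : ∀ x : A, uc x = u x := fun x => rfl
  set ρ : A →L[ℂ] ℂ := StrongDual.extendRCLike uc with hρ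
  have hrapp : ∀ x : A, ρ x = (u x : ℂ) - Complex.I * (u (Complex.I • x) : ℂ) := by
    intro x
    rw [hρ, ContinuousLinearMap.extendTo𝕜'_apply]
    norm_num [hucapp]
  have hu1 : u (1 : A) = 1 := by
    have h1 : u 1 ≤ 1 := (hu_le 1).trans_eq pq_one
    have h2 : u (-1 : A) ≤ -1 := (hu_le (-1)).trans_eq pq_neg_one
    rw [map_neg] at h2
    linarith
  have huI : u (Complex.I • (1 : A)) = 0 := by
    obtain ⟨hI1, hI2⟩ := pq_smul_I_nonpos (A := A)
    have h1 : u (Complex.I • (1:A)) ≤ 0 := (hu_le _).trans hI1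
    have h2 : u (-(Complex.I • (1:A))) ≤ 0 := (hu_le _).trans hI2
    rw [map_neg] at h2
    linarith
  have hρ1 : ρ (1 : A) = 1 := by
    rw [hrapp, hu1, huI]
    norm_num
  have hρnorm : ‖ρ‖ = 1 := by
    refine le_antisymm ?_ ?_
    · rw [hρ, ContinuousLinearMap.norm_extendTo𝕜']
      exact LinearMap.mkContinuous_norm_le u zero_le_one hubound
    · have := ρ.le_opNorm 1
      rw [hρ1, norm_one (α := A), mul_one] at this
      simpa using this
  have hstate : IsState ρ := ⟨hρnorm, hρ1⟩
  have hre : (ρ a).re = u a := by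
    rw [hrapp]
    simp
  have := hd ρ hstate
  rw [hre, hua] at this
  exact this

set_option maxHeartbeats 1000000 in
lemma norm_bound (a : A) (ha : ‖a‖ ≤ 1) (hpq : pq a ≤ 0) {t : ℝ} (ht : 0 ≤ t) :
    ‖(1:A) + t • a‖ ≤ 1 + t ^ 2 := by
  rcases eq_or_lt_of_le ht with rfl | htpos
  · simp
  have haa : ‖a * a‖ ≤ 1 := (norm_mul_le a a).trans (by nlinarith [norm_nonneg a])
  -- main estimate with ε-slack
  have H : ∀ ε : ℝ, 0 < ε → ‖(1:A) + t • a‖ ≤ (1 + t^2) * Real.exp (ε*t) := by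
    intro ε hε
    obtain ⟨b, ⟨t₀, ht₀, rfl⟩, hb⟩ := exists_lt_of_csInf_lt (gq_nonempty a)
      (show pq a < ε from lt_of_le_of_lt hpq hε)
    rw [mem_Ioi] at ht₀
    set n : ℕ := max 1 ⌈t/t₀⌉₊ with hn
    have hn1 : 1 ≤ n := le_max_left _ _
    have hnpos : (0:ℝ) < n := by exact_mod_cast Nat.lt_of_lt_of_le Nat.zero_lt_one hn1
    have hntt : t / t₀ ≤ (n : ℝ) := by
      refine (Nat.le_ceil _).trans ?_
      exact_mod_cast le_max_right 1 ⌈t/t₀⌉₊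
    set s : ℝ := t / n with hs
    have hspos : 0 < s := by positivity
    have hst₀ : s ≤ t₀ := by
      rw [hs, div_le_iff₀ hnpos]
      rw [div_le_iff₀ ht₀] at hntt
      linarith
    have hsmall : ‖(1:A) + s • a‖ ≤ 1 + ε * s := by
      have h1 : gq a s ≤ gq a t₀ := gq_mono a hspos hst₀
      have h2 : gq a s < ε := h1.trans_lt hb
      rw [gq, div_lt_iff₀ hspos] at h2
      linarith
    have key : ∀ k : ℕ, ‖(1:A) + ((k:ℝ)*s) • a‖ ≤ (1+ε*s)^k * (1+((k:ℝ)*s)^2) := by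
      intro k
      induction k with
      | zero => simp
      | succ k ih =>
        have hprod : ((1:A)+((k:ℝ)*s)•a) * ((1:A)+s•a)
            = (1:A) + (((k:ℝ)+1)*s)•a + (((k:ℝ)*s)*s)•(a*a) := by
          have he : ((k:ℝ)+1)*s = (k:ℝ)*s + s := by ring
          rw [he, add_smul]
          rw [mul_add, add_mul, add_mul]
          simp only [one_mul, mul_one]
          rw [smul_mul_assoc, mul_smul_comm, smul_smul]
          abel
        have hid : (1:A) + (((k:ℝ)+1)*s)•a
            = ((1:A)+((k:ℝ)*s)•a) * ((1:A)+s•a) - (((k:ℝ)*s)*s)•(a*a) := by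
          rw [hprod]; abel
        have hstep : ‖(1:A) + (((k:ℝ)+1)*s)•a‖
            ≤ ‖(1:A)+((k:ℝ)*s)•a‖ * ‖(1:A)+s•a‖ + ((k:ℝ)*s)*s := by
          rw [hid]
          refine (norm_sub_le _ _).trans ?_
          have h2 : ‖(((k:ℝ)*s)*s)•(a*a)‖ ≤ ((k:ℝ)*s)*s := by
            rw [norm_smul, Real.norm_eq_abs, _root_.abs_of_nonneg (by positivity)]
            have hkss : (0:ℝ) ≤ (k:ℝ)*s*s := by positivity
            nlinarith [mul_le_mul_of_nonneg_left haa hkss]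
          exact add_le_add (norm_mul_le _ _) h2
        have h1' : (1:ℝ) ≤ 1+ε*s := by nlinarith
        have hP : (1:ℝ) ≤ (1+ε*s)^k := one_le_pow₀ h1'
        have h3 : ‖(1:A)+((k:ℝ)*s)•a‖ * ‖(1:A)+s•a‖
            ≤ ((1+ε*s)^k * (1+((k:ℝ)*s)^2)) * (1+ε*s) :=
          mul_le_mul ih hsmall (norm_nonneg _) (by positivity)
        have hQ : (1:ℝ) ≤ (1+ε*s)^k * (1+ε*s) := by
          nlinarith [mul_le_mul hP h1' zero_le_one (zero_le_one.trans hP)]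
        have h4 : 0 ≤ ((1+ε*s)^k * (1+ε*s) - 1) * (((2*(k:ℝ)+1))*s^2) :=
          mul_nonneg (by linarith) (by positivity)
        have hps : (1+ε*s)^(k+1) = (1+ε*s)^k * (1+ε*s) := pow_succ _ _
        push_cast
        rw [hps]
        nlinarith [hstep, h3, h4, Nat.cast_nonneg (α := ℝ) k, sq_nonneg s]
    have hns : (n:ℝ) * s = t := by
      rw [hs]; field_simp
    have hfin := key n
    rw [hns] at hfin
    refine hfin.trans ?_
    have hexp : (1+ε*s)^n ≤ Real.exp (ε*t) := by
      have h1 : (1+ε*s) ≤ Real.exp (ε*s) := by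
        have := Real.add_one_le_exp (ε*s)
        linarith
      calc (1+ε*s)^n ≤ (Real.exp (ε*s))^n := by
            apply pow_le_pow_left₀ (by positivity) h1
        _ = Real.exp ((n:ℝ) * (ε*s)) := by rw [Real.exp_nat_mul]
        _ = Real.exp (ε*t) := by rw [show (n:ℝ)*(ε*s) = ε*((n:ℝ)*s) from by ring, hns]
    have h1t : (0:ℝ) < 1 + t^2 := by positivity
    calc (1+ε*s)^n * (1+t^2) ≤ Real.exp (ε*t) * (1+t^2) := by
          apply mul_le_mul_of_nonneg_right hexp (by positivity)
      _ = (1+t^2) * Real.exp (ε*t) := by ring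
  -- take ε → 0⁺
  have hlim : Filter.Tendsto (fun ε : ℝ => (1+t^2) * Real.exp (ε*t))
      (nhdsWithin 0 (Set.Ioi 0)) (nhds ((1+t^2) * Real.exp (0*t))) := by
    apply Filter.Tendsto.mono_left _ nhdsWithin_le_nhds
    exact (Continuous.tendsto (by continuity) 0)
  have := ge_of_tendsto hlim (Filter.eventually_iff_exists_mem.2
    ⟨Set.Ioi 0, self_mem_nhdsWithin, fun ε hε => H ε hε⟩)
  simpa using this

end Stmt3Aux

theorem stmt3 {A : Type*} [NormedRing A] [NormedAlgebra ℂ A] [NormOneClass A]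
    [CompleteSpace A] (a : A) (ha : ‖a‖ ≤ 1) :
    IsDissipative a ↔ ∀ t : ℝ, 0 ≤ t → ‖1 + (t : ℂ) • a‖ ≤ 1 + t ^ 2 := by
  constructor
  · intro hd t ht
    rw [Complex.coe_smul]
    exact norm_bound a ha (pq_nonpos_of_dissipative a hd) ht
  · intro h ρ hρ
    obtain ⟨hρn, hρ1⟩ := hρ
    refine le_of_forall_pos_le_add fun ε hε => ?_
    have h1 := h ε hε.le
    have h2 : ‖ρ ((1:A) + (ε:ℂ) • a)‖ ≤ 1 + ε^2 := by
      calc ‖ρ ((1:A) + (ε:ℂ) • a)‖ ≤ ‖ρ‖ * ‖(1:A) + (ε:ℂ) • a‖ := ρ.le_opNorm _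
        _ = ‖(1:A) + (ε:ℂ) • a‖ := by rw [hρn, one_mul]
        _ ≤ 1 + ε^2 := h1
    have h3 : ρ ((1:A) + (ε:ℂ) • a) = 1 + (ε:ℂ) * ρ a := by
      rw [map_add, map_smul, hρ1, smul_eq_mul]
    have h4 : (ρ ((1:A) + (ε:ℂ) • a)).re = 1 + ε * (ρ a).re := by
      rw [h3]
      simp [Complex.add_re, Complex.mul_re]
    have h5 : (ρ ((1:A) + (ε:ℂ) • a)).re ≤ ‖ρ ((1:A) + (ε:ℂ) • a)‖ := by
      exact Complex.re_le_norm _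
    have h6 : ε * (ρ a).re ≤ ε * ε := by nlinarith
    have h7 : (ρ a).re ≤ ε := le_of_mul_le_mul_left h6 hε
    linarith
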